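/- For every natural number n and every real number z > 1/4, the G-polynomial satisfies G_n(z) = (2·z^{(n+1)/2} / √(4z−1)) · sin((n+1) · arccos(1/(2√z))), where z^{(n+1)/2} means (√z)^{n+1}. -/

import Mathlib

/-- The G-polynomials: `G 0 z = 1`, `G 1 z = 1`, `G (n+2) z = G (n+1) z - z * G n z`. -/
noncomputable def G : ℕ → ℝ → ℝ
  | 0, _ => 1
  | 1, _ => 1
  | (n + 2), z => G (n + 1) z - z * G n z

theorem stmt_2 (n : ℕ) (z : ℝ) (hz : 1 / 4 < z) :
    G n z = 2 * (Real.sqrt z) ^ (n + 1) / Real.sqrt (4 * z - 1) *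
      Real.sin ((n + 1) * Real.arccos (1 / (2 * Real.sqrt z))) := by
  have hz0 : (0:ℝ) < z := by linarith
  have hs : 0 < Real.sqrt z := Real.sqrt_pos.2 hz0
  have hs2 : Real.sqrt z ^ 2 = z := Real.sq_sqrt hz0.le
  have h2s : 1 < 2 * Real.sqrt z := by nlinarith
  set θ := Real.arccos (1 / (2 * Real.sqrt z)) with hθ
  have hx0 : (0:ℝ) < 1 / (2 * Real.sqrt z) := by positivity
  have hx1 : 1 / (2 * Real.sqrt z) ≤ 1 := by
    rw [div_le_one (by linarith)]; linarith
  have hcos : Real.cos θ = 1 / (2 * Real.sqrt z) :=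
    Real.cos_arccos (by linarith) hx1
  have hw : 0 < 4 * z - 1 := by linarith
  have hws : 0 < Real.sqrt (4 * z - 1) := Real.sqrt_pos.2 hw
  have hws2 : Real.sqrt (4 * z - 1) ^ 2 = 4 * z - 1 := Real.sq_sqrt hw.le
  have hsin : Real.sin θ = Real.sqrt (4 * z - 1) / (2 * Real.sqrt z) := by
    rw [hθ, Real.sin_arccos,
      show (1:ℝ) - (1 / (2 * Real.sqrt z)) ^ 2 = (4 * z - 1) / (2 * Real.sqrt z) ^ 2 by
        field_simp; nlinarith,
      Real.sqrt_div hw.le, Real.sqrt_sq (by linarith)]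
  induction n using Nat.twoStepInduction with
  | zero =>
      show (1:ℝ) = _
      push_cast
      rw [show ((0:ℝ)+1) * θ = θ by ring, hsin, pow_one]
      field_simp
  | one =>
      show (1:ℝ) = _
      push_cast
      rw [show ((1:ℝ) + 1) * θ = θ + θ by ring, Real.sin_add, hsin, hcos]
      field_simp
      nlinarith
  | more n ih2 ih1 =>
      show G (n + 1) z - z * G n z = _
      rw [ih1, ih2]
      have key : Real.sin ((↑(n + 2) + 1) * θ)
          = 2 * Real.cos θ * Real.sin ((↑(n + 1) + 1) * θ) - Real.sin ((↑n + 1) * θ) := by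
        have h1 : (↑(n + 2) + 1 : ℝ) * θ = (↑(n + 1) + 1) * θ + θ := by push_cast; ring
        have h2 : (↑n + 1 : ℝ) * θ = (↑(n + 1) + 1) * θ - θ := by push_cast; ring
        rw [h1, h2, Real.sin_add, Real.sin_sub]; ring
      rw [key, hcos]
      have hpow1 : Real.sqrt z ^ (n + 1 + 1) = Real.sqrt z ^ (n + 1) * Real.sqrt z := by ring
      have hpow2 : Real.sqrt z ^ (n + 2 + 1) = Real.sqrt z ^ (n + 1) * z := by
        rw [show n + 2 + 1 = n + 1 + 2 by ring, pow_add, hs2]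
      rw [hpow1, hpow2]
      set w := Real.sqrt (4 * z - 1) with hwdef
      field_simp
      linear_combination Real.sin ((↑(n + 1) + 1 : ℝ) * θ) * hs2
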